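/- Let Z be a uniform read-d-times non-deterministic branching program and let X ⊆ V(Z) be a set separating two disjoint subsets Y_1 and Y_2 of Vars(Z). Let Y_1' ⊆ Y_1 and Y_2' ⊆ Y_2, let S be an assignment to Vars(Z) \ (Y_1 ∪ Y_2), and let Q' and Q'' be two computational paths of Z passing through all vertices of X with S ⊆ A(Q') ∩ A(Q''), such that Q' assigns all variables of Y_1' negatively and Q'' assigns all variables of Y_2' negatively. Then there is a computational path Q* of Z passing through all vertices of X with S ⊆ A(Q*) that assigns all variables of Y_1' ∪ Y_2' negatively. -/

import Mathlib

open scoped Classical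

namespace NBPPaper

/-! ### Literals and assignments.
A literal is a pair `(x, b)` of a variable and a polarity (`true` = positive literal).
A set of literals is a `Finset (Var × Bool)`. -/

/-- A set of literals is consistent: no variable occurs both positively and negatively. -/
def Consistent {Var : Type} (S : Finset (Var × Bool)) : Prop :=
  ∀ x : Var, ¬((x, true) ∈ S ∧ (x, false) ∈ S)

/-- `S` is a set of literals over the variable set `W`. -/
def LitsOver {Var : Type} (W : Finset Var) (S : Finset (Var × Bool)) : Prop :=
  Consistent S ∧ ∀ l ∈ S, l.1 ∈ W

/-- `S` is an assignment of exactly the variables of `W`: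
it contains exactly one literal of each variable of `W` and nothing else. -/
def AssignsExactly {Var : Type} (W : Finset Var) (S : Finset (Var × Bool)) : Prop :=
  (∀ l ∈ S, l.1 ∈ W) ∧ ∀ x ∈ W, ∃! b : Bool, (x, b) ∈ S

/-- Satisfaction of a CNF, given as a set of clauses (each clause a set of literals):
every clause contains a literal of `S`. -/
def SatCNF {V : Type} (φ : Set (Finset (V × Bool))) (S : Finset (V × Bool)) : Prop :=
  ∀ C ∈ φ, ∃ l ∈ C, l ∈ S

/-! ### Nondeterministic branching programs -/

/-- An edge of a nondeterministic branching program over variable type `Var`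
with vertex set `Fin n`.  `lab = none` means the edge is unlabelled; the field
`id` allows parallel edges (multigraph). -/
structure NBPEdge (Var : Type) (n : ℕ) where
  src : Fin n
  dst : Fin n
  lab : Option (Var × Bool)
  id : ℕ
deriving DecidableEq

/-- A nondeterministic branching program: a finite DAG (the vertices `Fin n` are
listed in a topological order, i.e. every edge increases the index) with a single
source (the only vertex with no incoming edge) and a single sink (the only vertex
with no outgoing edge). -/
structure NBP (Var : Type) where
  n : ℕ
  edges : Finset (NBPEdge Var n)
  source : Fin n
  sink : Fin n
  acyc : ∀ e ∈ edges, e.src < e.dst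
  source_no_in : ∀ e ∈ edges, e.dst ≠ source
  sink_no_out : ∀ e ∈ edges, e.src ≠ sink
  only_source : ∀ v : Fin n, v ≠ source → ∃ e ∈ edges, e.dst = v
  only_sink : ∀ v : Fin n, v ≠ sink → ∃ e ∈ edges, e.src = v

variable {Var : Type}

/-- The set of literals labelling the edges of a path (a list of edges). -/
def pathLits [DecidableEq Var] {n : ℕ} (p : List (NBPEdge Var n)) : Finset (Var × Bool) :=
  (p.filterMap NBPEdge.lab).toFinset

/-- The set of variables occurring (as edge labels) on a path. -/
def pathVars [DecidableEq Var] {n : ℕ} (p : List (NBPEdge Var n)) : Finset Var :=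
  ((p.filterMap NBPEdge.lab).map Prod.fst).toFinset

/-- The set of vertices visited by a path. -/
def pathVertices {n : ℕ} (p : List (NBPEdge Var n)) : Finset (Fin n) :=
  (p.map NBPEdge.src).toFinset ∪ (p.map NBPEdge.dst).toFinset

/-- The number of occurrences of the variable `x` as an edge label on the path `p`. -/
def occCount [DecidableEq Var] {n : ℕ} (x : Var) (p : List (NBPEdge Var n)) : ℕ :=
  (p.filterMap NBPEdge.lab).countP (fun l => decide (l.1 = x))

namespace NBP

/-- `p` is a directed path of `Z` from vertex `u` to vertex `v`. -/
def IsPathFrom (Z : NBP Var) (u v : Fin Z.n) (p : List (NBPEdge Var Z.n)) : Prop :=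
  p ≠ [] ∧ (∀ e ∈ p, e ∈ Z.edges) ∧ List.Chain' (fun e f => e.dst = f.src) p ∧
    p.head?.map NBPEdge.src = some u ∧ p.getLast?.map NBPEdge.dst = some v

/-- `p` is a source-sink path of `Z`. -/
def IsSourceSink (Z : NBP Var) (p : List (NBPEdge Var Z.n)) : Prop :=
  Z.IsPathFrom Z.source Z.sink p

/-- A computational path: a source-sink path carrying no two opposite literals. -/
def IsCompPath [DecidableEq Var] (Z : NBP Var) (p : List (NBPEdge Var Z.n)) : Prop :=
  Z.IsSourceSink p ∧ Consistent (pathLits p)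

/-- The set `Vars(Z)` of variables whose literals occur on edges of `Z`. -/
def vars [DecidableEq Var] (Z : NBP Var) : Finset Var :=
  Z.edges.biUnion (fun e => (e.lab.map Prod.fst).toFinset)

/-- `Z` is a (syntactic) read-`d`-times NBP. -/
def ReadTimes [DecidableEq Var] (Z : NBP Var) (d : ℕ) : Prop :=
  ∀ p, Z.IsSourceSink p → ∀ x : Var, occCount x p ≤ d

/-- `Z` is a uniform read-`d`-times NBP: every variable of `Z` occurs exactly `d`
times on every source-sink path. -/
def UniformReadTimes [DecidableEq Var] (Z : NBP Var) (d : ℕ) : Prop :=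
  Z.ReadTimes d ∧ ∀ p, Z.IsSourceSink p → ∀ x ∈ Z.vars, occCount x p = d

/-- `Z` computes the Boolean function with variable set `W` whose satisfying
(total) assignments are described by the predicate `F`. -/
def Computes [DecidableEq Var] (Z : NBP Var) (W : Finset Var)
    (F : Finset (Var × Bool) → Prop) : Prop :=
  Z.vars = W ∧ ∀ S, AssignsExactly W S → (F S ↔ ∃ p, Z.IsCompPath p ∧ pathLits p ⊆ S)

end NBP

/-- `parts` is the partition of the path `p` generated by the vertex set `X`:
`p` is cut into `|X| + 1` consecutive nonempty subpaths whose cut points are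
exactly the vertices of `X`. -/
def GeneratesPartition {n : ℕ} (X : Finset (Fin n)) (p : List (NBPEdge Var n))
    (parts : List (List (NBPEdge Var n))) : Prop :=
  p = parts.flatten ∧ parts.length = X.card + 1 ∧ (∀ q ∈ parts, q ≠ []) ∧
    (parts.dropLast.filterMap (fun q => q.getLast?.map NBPEdge.dst)).toFinset = X

/-- Variables of `Y₁` occur only on parts with even (0-based) index, i.e. odd-numbered
subpaths, and variables of `Y₂` only on parts with odd (0-based) index. -/
def OddEvenSplit [DecidableEq Var] {n : ℕ} (parts : List (List (NBPEdge Var n)))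
    (Y₁ Y₂ : Finset Var) : Prop :=
  ∀ k : ℕ, ∀ x ∈ pathVars (parts.getD k []),
    (x ∈ Y₁ → k % 2 = 0) ∧ (x ∈ Y₂ → k % 2 = 1)

/-- The set `X` of vertices of `Z` (containing neither source nor sink) separates the two
disjoint subsets `Y₁, Y₂` of `Vars(Z)`. -/
def NBP.Separates [DecidableEq Var] (Z : NBP Var) (X : Finset (Fin Z.n))
    (Y₁ Y₂ : Finset Var) : Prop :=
  Disjoint Y₁ Y₂ ∧ Y₁ ⊆ Z.vars ∧ Y₂ ⊆ Z.vars ∧ Z.source ∉ X ∧ Z.sink ∉ X ∧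
  ∃ p parts, Z.IsCompPath p ∧ GeneratesPartition X p parts ∧
    (OddEvenSplit parts Y₁ Y₂ ∨ OddEvenSplit parts Y₂ Y₁)

/-! ### Rooted trees -/

/-- A finite rooted tree on (a subset of) the vertex type `V`, given by a parent
function together with a depth function certifying acyclicity. -/
structure RootedTree (V : Type) [DecidableEq V] where
  verts : Finset V
  root : V
  parent : V → V
  depth : V → ℕ
  root_mem : root ∈ verts
  parent_mem : ∀ v ∈ verts, v ≠ root → parent v ∈ verts
  depth_root : depth root = 0
  depth_parent : ∀ v ∈ verts, v ≠ root → depth v = depth (parent v) + 1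

namespace RootedTree

variable {V : Type} [DecidableEq V]

/-- The children of a vertex. -/
def children (T : RootedTree V) (u : V) : Finset V :=
  T.verts.filter (fun v => v ≠ T.root ∧ T.parent v = u)

/-- The leaves of the tree: vertices with no children. -/
def leaves (T : RootedTree V) : Finset V :=
  T.verts.filter (fun v => T.children v = ∅)

/-- The vertex set of the path from the root to `v` (i.e. `v` and all its ancestors). -/
def pathVerts (T : RootedTree V) (v : V) : Finset V :=
  (Finset.range (T.depth v + 1)).image (fun k => T.parent^[k] v)

/-- The height of the tree: the largest number of vertices on a root-leaf path. -/
def height (T : RootedTree V) : ℕ :=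
  (T.verts.sup T.depth) + 1

/-- Every vertex has at most two children. -/
def IsBinary (T : RootedTree V) : Prop :=
  ∀ u ∈ T.verts, (T.children u).card ≤ 2

/-- The tree is extended: none of its leaves has a sibling. -/
def IsExtended (T : RootedTree V) : Prop :=
  ∀ v ∈ T.verts, v ≠ T.root → T.children v = ∅ → T.children (T.parent v) = {v}

/-- The edge set of the tree (as unordered pairs). -/
def edgeSet (T : RootedTree V) : Finset (Sym2 V) :=
  (T.verts.filter (fun v => v ≠ T.root)).image (fun v => s(v, T.parent v))

end RootedTree

/-! ### Binary-tree-based graphs and pseudoexpanders -/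

/-- A binary-tree-based (BTB) graph on the vertex type `V`: an edge-disjoint union of
`m` extended binary rooted trees such that every leaf of one of the trees is a leaf of
exactly two of the trees, any two trees have at most one vertex in common (that vertex
being a leaf of both), and the roots are pairwise distinct. -/
structure BTB (V : Type) [DecidableEq V] [Fintype V] where
  m : ℕ
  tree : Fin m → RootedTree V
  binary : ∀ i, (tree i).IsBinary
  extended : ∀ i, (tree i).IsExtended
  cover : ∀ v : V, ∃ i, v ∈ (tree i).verts
  edge_disjoint : ∀ i j, i ≠ j → Disjoint ((tree i).edgeSet) ((tree j).edgeSet)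
  leaf_two : ∀ i, ∀ v ∈ (tree i).leaves,
    (Finset.univ.filter (fun j => v ∈ (tree j).leaves)).card = 2
  common_le_one : ∀ i j, i ≠ j → ∀ u v,
    u ∈ (tree i).verts → u ∈ (tree j).verts →
    v ∈ (tree i).verts → v ∈ (tree j).verts → u = v
  common_leaf : ∀ i j, i ≠ j → ∀ v, v ∈ (tree i).verts → v ∈ (tree j).verts →
    v ∈ (tree i).leaves ∧ v ∈ (tree j).leaves
  roots_inj : Function.Injective (fun i => (tree i).root)

namespace BTB

variable {V : Type} [DecidableEq V] [Fintype V]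

/-- `ℓ` is the common leaf of the (adjacent) trees `T_i` and `T_j`. -/
def IsCommonLeaf (H : BTB V) (i j : Fin H.m) (ℓ : V) : Prop :=
  i ≠ j ∧ ℓ ∈ (H.tree i).leaves ∧ ℓ ∈ (H.tree j).leaves

/-- The trees `T_i` and `T_j` are adjacent (share a common leaf); equivalently,
`{t_i, t_j}` is a pseudoedge of `H`. -/
def Adjacent (H : BTB V) (i j : Fin H.m) : Prop :=
  ∃ ℓ, H.IsCommonLeaf i j ℓ

/-- The pseudodegree of the root `t_i`: the number of pseudoedges containing it. -/
noncomputable def pseudodegree (H : BTB V) (i : Fin H.m) : ℕ :=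
  (Finset.univ.filter (fun j => H.Adjacent i j)).card

/-- The set of root vertices of `H`. -/
def rootSet (H : BTB V) : Finset V :=
  Finset.univ.image (fun i => (H.tree i).root)

/-- A pseudomatching: a set of pseudoedges (recorded as ordered pairs of root indices
with `i < j`) no two of which share an end. -/
def IsPseudomatching (H : BTB V) (M : Finset (Fin H.m × Fin H.m)) : Prop :=
  (∀ e ∈ M, e.1 < e.2 ∧ H.Adjacent e.1 e.2) ∧
  ∀ e ∈ M, ∀ f ∈ M, e ≠ f → e.1 ≠ f.1 ∧ e.1 ≠ f.2 ∧ e.2 ≠ f.1 ∧ e.2 ≠ f.2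

/-- A pseudomatching between the disjoint sets `U` and `W` of roots (given by their
indices): every pseudoedge of `M` has one end in `U` and the other in `W`. -/
def IsPseudomatchingBetween (H : BTB V) (M : Finset (Fin H.m × Fin H.m))
    (U W : Finset (Fin H.m)) : Prop :=
  H.IsPseudomatching M ∧ ∀ e ∈ M, (e.1 ∈ U ∧ e.2 ∈ W) ∨ (e.1 ∈ W ∧ e.2 ∈ U)

/-- The set `⋃M` of root vertices matched by the pseudomatching `M`. -/
def matchingRoots (H : BTB V) (M : Finset (Fin H.m × Fin H.m)) : Finset V :=
  M.biUnion (fun e => {(H.tree e.1).root, (H.tree e.2).root})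

/-- The vertex set `V(P_{i,j})` of the path connecting the roots `t_i` and `t_j`
through their common leaf `ℓ`. -/
def clauseVerts (H : BTB V) (i j : Fin H.m) (ℓ : V) : Finset V :=
  (H.tree i).pathVerts ℓ ∪ (H.tree j).pathVerts ℓ

/-- `S` satisfies the monotone CNF `φ_H`. -/
def SatisfiesPhi (H : BTB V) (S : Finset (V × Bool)) : Prop :=
  ∀ i j ℓ, H.IsCommonLeaf i j ℓ → ∃ v ∈ H.clauseVerts i j ℓ, (v, true) ∈ S

/-- `S` falsifies no clause of `φ_H`. -/
def FalsifiesNoClause (H : BTB V) (S : Finset (V × Bool)) : Prop :=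
  ∀ i j ℓ, H.IsCommonLeaf i j ℓ → ¬(∀ v ∈ H.clauseVerts i j ℓ, (v, false) ∈ S)

/-- `H` is a pseudoexpander. -/
def IsPseudoexpander (H : BTB V) : Prop :=
  (∀ i, ((H.tree i).height : ℝ) ≤ Real.logb 2 H.m / 4.9 + 3) ∧
  ∀ U W : Finset (Fin H.m), Disjoint U W →
    (H.m : ℝ) ^ (0.999 : ℝ) ≤ U.card → (H.m : ℝ) ^ (0.999 : ℝ) ≤ W.card →
    ∃ M, H.IsPseudomatchingBetween M U W ∧ (H.m : ℝ) ^ (0.999 : ℝ) / 3 ≤ M.card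

/-! #### The probability space on the satisfying assignments of `φ_H` -/

/-- The set `SAT(H)` of satisfying assignments of `φ_H` (total assignments of the
variables `V(H)` satisfying every clause). -/
noncomputable def SATH (H : BTB V) : Finset (Finset (V × Bool)) :=
  Finset.univ.filter (fun S => AssignsExactly Finset.univ S ∧ H.SatisfiesPhi S)

/-- `Fix(S)`: the set of leaf variables `ℓ_{i,j}` occurring positively in `S` such that
all the other variables of the clause `C_{i,j}` occur negatively in `S`. -/
def Fix (H : BTB V) (S : Finset (V × Bool)) : Set V :=
  {ℓ | ∃ i j, H.IsCommonLeaf i j ℓ ∧ (ℓ, true) ∈ S ∧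
      ∀ v ∈ H.clauseVerts i j ℓ, v ≠ ℓ → (v, false) ∈ S}

/-- The probability weight of `S`: `(1/2) ^ |V(H) \ Fix(S)|`. -/
noncomputable def weight (H : BTB V) (S : Finset (V × Bool)) : ℝ :=
  (1 / 2 : ℝ) ^ (Fintype.card V - (H.Fix S).ncard)

/-- The probability of the event `E` in the probability space on `SAT(H)`. -/
noncomputable def Pr (H : BTB V) (E : Finset (V × Bool) → Prop) : ℝ :=
  ∑ S ∈ H.SATH.filter E, H.weight S

/-- `|S \ Fix(S)|`: the number of literals of `S` that are not fixed. -/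
noncomputable def nonFixedCount (H : BTB V) (S : Finset (V × Bool)) : ℕ :=
  (S.filter (fun l => ¬(l.2 = true ∧ l.1 ∈ H.Fix S))).card

/-- `v` and `w` are siblings (in one of the trees of `H`). -/
def Sibling (H : BTB V) (v w : V) : Prop :=
  ∃ k, v ∈ (H.tree k).verts ∧ w ∈ (H.tree k).verts ∧
    v ≠ (H.tree k).root ∧ w ≠ (H.tree k).root ∧ v ≠ w ∧
    (H.tree k).parent v = (H.tree k).parent w

/-- `S` respects the pseudoedge `{t_i, t_j}`: all non-root variables of `C_{i,j}` occur
negatively in `S` and the siblings of all internal variables of `C_{i,j}` occur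
positively in `S`. -/
def Respects (H : BTB V) (i j : Fin H.m) (S : Finset (V × Bool)) : Prop :=
  ∃ ℓ, H.IsCommonLeaf i j ℓ ∧
    (∀ v ∈ H.clauseVerts i j ℓ,
      v ≠ (H.tree i).root → v ≠ (H.tree j).root → (v, false) ∈ S) ∧
    (∀ v ∈ H.clauseVerts i j ℓ,
      v ≠ (H.tree i).root → v ≠ (H.tree j).root → v ≠ ℓ →
      ∀ w, H.Sibling v w → (w, true) ∈ S)

/-- `S` is `η`-comfortable w.r.t. the pseudomatching `M`: `S` falsifies no clause of
`φ_H` and respects at least `η·|M|` pseudoedges of `M`. -/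
noncomputable def Comfortable (H : BTB V) (M : Finset (Fin H.m × Fin H.m)) (η : ℝ)
    (S : Finset (V × Bool)) : Prop :=
  H.FalsifiesNoClause S ∧
    η * M.card ≤ ((M.filter (fun e => H.Respects e.1 e.2 S)).card : ℝ)

/-- `S` is a guarded set of literals. -/
def Guarded (H : BTB V) (S : Finset (V × Bool)) : Prop :=
  Consistent S ∧ ∀ i j ℓ, H.IsCommonLeaf i j ℓ →
    ((ℓ, true) ∉ S ∧ (ℓ, false) ∉ S) ∨
    (∃ v ∈ H.clauseVerts i j ℓ, v ≠ ℓ ∧ (v, true) ∈ S) ∨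
    ((ℓ, true) ∈ S ∧ ∀ v ∈ H.clauseVerts i j ℓ, v ≠ ℓ → (v, false) ∈ S)

/-! #### Matching CNFs and matching OR-CNFs -/

/-- The 'half clause' `C^{1/2}_{i,j}`: the positive clause on the vertices of the path
from `t_i` (if `side = true`) or from `t_j` (if `side = false`) to the common leaf `ℓ`. -/
def halfClause (H : BTB V) (i j : Fin H.m) (ℓ : V) (side : Bool) : Finset (V × Bool) :=
  (if side then (H.tree i).pathVerts ℓ else (H.tree j).pathVerts ℓ).image (fun v => (v, true))

/-- The matching CNF w.r.t. `M` determined by the side choice `c`: one half clause per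
pseudoedge of `M`.  The formulas of `CNF(M)` are exactly the CNFs `matchingCNF H M c`. -/
def matchingCNF (H : BTB V) (M : Finset (Fin H.m × Fin H.m))
    (c : Fin H.m × Fin H.m → Bool) : Set (Finset (V × Bool)) :=
  {C | ∃ e ∈ M, ∃ ℓ, H.IsCommonLeaf e.1 e.2 ℓ ∧ C = H.halfClause e.1 e.2 ℓ (c e)}

/-- A matching OR-CNF w.r.t. `M` is determined by a map `Ψ` assigning to each assignment
`S₀` of the variables `V(H) \ ⋃M` a matching CNF (given by its side choice `Ψ S₀`);
the formula is `⋁_{S₀} (Conj(S₀) ∧ matchingCNF H M (Ψ S₀))`.  `S` satisfies it iff for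
(the) `S₀ ⊆ S`, `S` satisfies the corresponding matching CNF. -/
def SatORCNF (H : BTB V) (M : Finset (Fin H.m × Fin H.m))
    (Ψ : Finset (V × Bool) → (Fin H.m × Fin H.m) → Bool) (S : Finset (V × Bool)) : Prop :=
  ∃ S₀, AssignsExactly (Finset.univ \ H.matchingRoots M) S₀ ∧ S₀ ⊆ S ∧
    SatCNF (H.matchingCNF M (Ψ S₀)) S

/-- `X` is an `(a, b)`-determining set for the NBP `Z` computing `φ_H`. -/
def IsDeterminingSet (H : BTB V) (Z : NBP V) (a b : ℝ) (X : Finset (Fin Z.n)) : Prop :=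
  (X.card : ℝ) ≤ a ∧
  ∃ M : Finset (Fin H.m × Fin H.m), H.IsPseudomatching M ∧ b ≤ (M.card : ℝ) ∧
    ∃ Ψ : Finset (V × Bool) → (Fin H.m × Fin H.m) → Bool,
      ∀ p, Z.IsCompPath p → X ⊆ pathVertices p → H.SatORCNF M Ψ (pathLits p)

end BTB


-- ==================== auxiliary development ====================
section Aux
variable [DecidableEq Var]

/-- number of cut vertices at or before the source of `e` -/
def cntCuts {n : ℕ} (cs : List (Fin n)) (e : NBPEdge Var n) : ℕ :=
  (cs.filter (fun c => decide (c.val ≤ e.src.val))).length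

def labX {n : ℕ} (x : Var) (e : NBPEdge Var n) : Bool :=
  decide (Option.map Prod.fst e.lab = some x)

lemma labX_iff {n : ℕ} {x : Var} {e : NBPEdge Var n} :
    labX x e = true ↔ ∃ b, e.lab = some (x, b) := by
  constructor
  · intro hx
    cases h : e.lab with
    | none => simp [labX, h] at hx
    | some l =>
      obtain ⟨y, b⟩ := l
      simp [labX, h] at hx
      refine ⟨b, ?_⟩
      simp [h, hx]
  · rintro ⟨c, hc⟩
    simp [labX, hc]

lemma mem_pathLits {n : ℕ} {p : List (NBPEdge Var n)} {x : Var} {b : Bool} :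
    (x, b) ∈ pathLits p ↔ ∃ e ∈ p, e.lab = some (x, b) := by
  simp [pathLits, List.mem_filterMap]

lemma mem_pathVars {n : ℕ} {p : List (NBPEdge Var n)} {x : Var} :
    x ∈ pathVars p ↔ ∃ e ∈ p, ∃ b, e.lab = some (x, b) := by
  simp only [pathVars, List.mem_toFinset, List.mem_map, List.mem_filterMap]
  constructor
  · rintro ⟨⟨y, b⟩, ⟨e, he, hl⟩, rfl⟩; exact ⟨e, he, b, hl⟩
  · rintro ⟨e, he, b, hl⟩; exact ⟨(x, b), ⟨e, he, hl⟩, rfl⟩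

lemma mem_pathVertices {n : ℕ} {p : List (NBPEdge Var n)} {t : Fin n} :
    t ∈ pathVertices p ↔ ∃ e ∈ p, e.src = t ∨ e.dst = t := by
  simp only [pathVertices, Finset.mem_union, List.mem_toFinset, List.mem_map]
  constructor
  · rintro (⟨e, he, rfl⟩ | ⟨e, he, rfl⟩)
    exacts [⟨e, he, Or.inl rfl⟩, ⟨e, he, Or.inr rfl⟩]
  · rintro ⟨e, he, rfl | rfl⟩
    exacts [Or.inl ⟨e, he, rfl⟩, Or.inr ⟨e, he, rfl⟩]

lemma pathVertices_append {n : ℕ} (a b : List (NBPEdge Var n)) :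
    pathVertices (a ++ b) = pathVertices a ∪ pathVertices b := by
  ext t
  simp only [mem_pathVertices, Finset.mem_union, List.mem_append]
  constructor
  · rintro ⟨e, he | he, h⟩
    exacts [Or.inl ⟨e, he, h⟩, Or.inr ⟨e, he, h⟩]
  · rintro (⟨e, he, h⟩ | ⟨e, he, h⟩)
    exacts [⟨e, Or.inl he, h⟩, ⟨e, Or.inr he, h⟩]

lemma occCount_eq_countP {n : ℕ} (x : Var) (p : List (NBPEdge Var n)) :
    occCount x p = p.countP (labX x) := by
  induction p with
  | nil => rfl
  | cons e t ih =>
    simp only [occCount, List.filterMap_cons] at *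
    cases h : e.lab with
    | none => simp [List.countP_cons, labX, h, ih]
    | some l =>
      obtain ⟨y, b⟩ := l
      simp [List.countP_cons, labX, h, ih]

lemma path_pairwise {Z : NBP Var} {u w : Fin Z.n} {p : List (NBPEdge Var Z.n)}
    (hp : Z.IsPathFrom u w p) :
    p.Pairwise (fun e f => e.src.val < f.src.val ∧ e.dst.val < f.dst.val) := by
  obtain ⟨-, hmem, hch, -, -⟩ := hp
  haveI : IsTrans (NBPEdge Var Z.n)
      (fun e f => e.src.val < f.src.val ∧ e.dst.val < f.dst.val) :=
    ⟨fun a b c h1 h2 => ⟨Nat.lt_trans h1.1 h2.1, Nat.lt_trans h1.2 h2.2⟩⟩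
  unfold List.Chain' at hch
  rw [← List.isChain_iff_pairwise]
  clear * - hmem hch
  induction p with
  | nil => simp
  | cons e t ih =>
    cases t with
    | nil => simp
    | cons f t' =>
      rw [List.isChain_cons_cons] at hch ⊢
      refine ⟨?_, ih (fun g hg => hmem g (List.mem_cons_of_mem _ hg)) hch.2⟩
      have h1 : e.src.val < e.dst.val := Fin.lt_def.mp (Z.acyc e (hmem e (List.mem_cons_self)))
      have h2 : f.src.val < f.dst.val := Fin.lt_def.mp
        (Z.acyc f (hmem f (List.mem_cons_of_mem _ (List.mem_cons_self))))
      have h3 : e.dst = f.src := hch.1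
      constructor
      · rw [← h3]; exact h1
      · rw [h3] at h1 ⊢; omega

lemma edge_bounds {Z : NBP Var} {u w : Fin Z.n} {p : List (NBPEdge Var Z.n)}
    (hp : Z.IsPathFrom u w p) :
    ∀ e ∈ p, u.val ≤ e.src.val ∧ e.src.val < e.dst.val ∧ e.dst.val ≤ w.val := by
  have hpair := path_pairwise hp
  obtain ⟨hne, hmem, hch, hhd, hlst⟩ := hp
  intro e he
  have hsd : e.src.val < e.dst.val := Fin.lt_def.mp (Z.acyc e (hmem e he))
  refine ⟨?_, hsd, ?_⟩
  · -- head
    cases p with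
    | nil => exact absurd rfl hne
    | cons e₀ t =>
      have h0 : e₀.src = u := by
        simp only [List.head?_cons, Option.map_some] at hhd
        exact Option.some.inj hhd
      rcases List.mem_cons.mp he with rfl | het
      · rw [h0]
      · have := (List.pairwise_cons.mp hpair).1 e het
        omega
  · -- last, via reverse
    have hl : p.getLast hne ∈ p := List.getLast_mem hne
    have hld : (p.getLast hne).dst = w := by
      rw [List.getLast?_eq_getLast hne] at hlst
      simpa using hlst
    by_cases hel : e = p.getLast hne
    · rw [hel, hld]
    · have hpair' := (List.pairwise_reverse.mpr hpair)
      have hrev : p.reverse = p.getLast hne :: (p.dropLast).reverse := by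
        conv_lhs => rw [← List.dropLast_append_getLast hne]
        simp
      have hmem' : e ∈ p.dropLast.reverse := by
        have : e ∈ p.reverse := List.mem_reverse.mpr he
        rw [hrev] at this
        rcases List.mem_cons.mp this with h | h
        · exact absurd h hel
        · exact h
      rw [hrev] at hpair'
      have := (List.pairwise_cons.mp hpair').1 e hmem'
      omega

lemma vert_bounds {Z : NBP Var} {u w : Fin Z.n} {p : List (NBPEdge Var Z.n)}
    (hp : Z.IsPathFrom u w p) {t : Fin Z.n} (ht : t ∈ pathVertices p) :
    u.val ≤ t.val ∧ t.val ≤ w.val := by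
  obtain ⟨e, he, h | h⟩ := mem_pathVertices.mp ht
  · have := edge_bounds hp e he
    subst h; omega
  · have := edge_bounds hp e he
    subst h; omega

lemma single_path {Z : NBP Var} {e : NBPEdge Var Z.n} (he : e ∈ Z.edges) :
    Z.IsPathFrom e.src e.dst [e] := by
  refine ⟨by simp, ?_, by simp [List.Chain'], by simp, by simp⟩
  intro f hf
  rcases List.mem_singleton.mp hf with rfl
  exact he

lemma path_glue {Z : NBP Var} {u v w : Fin Z.n} {a b : List (NBPEdge Var Z.n)}
    (h1 : Z.IsPathFrom u v a) (h2 : Z.IsPathFrom v w b) :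
    Z.IsPathFrom u w (a ++ b) := by
  obtain ⟨ha, hm1, hc1, hh1, hl1⟩ := h1
  obtain ⟨hb, hm2, hc2, hh2, hl2⟩ := h2
  refine ⟨by simp [ha], ?_, ?_, ?_, ?_⟩
  · intro e he
    rcases List.mem_append.mp he with h | h
    exacts [hm1 e h, hm2 e h]
  · unfold List.Chain'
    rw [List.isChain_append]
    refine ⟨hc1, hc2, ?_⟩
    intro x hx y hy
    have hxv : x.dst = v := by rw [hx] at hl1; simpa using hl1
    have hyv : y.src = v := by rw [hy] at hh2; simpa using hh2
    rw [hxv, hyv]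
  · rw [List.head?_append_of_ne_nil _ ha]
    exact hh1
  · rw [List.getLast?_append]
    cases hgb : b.getLast? with
    | none => exact absurd (List.getLast?_eq_none_iff.mp hgb) hb
    | some y => rw [hgb] at hl2; simpa using hl2

lemma path_unglue {Z : NBP Var} {u w : Fin Z.n} {a b : List (NBPEdge Var Z.n)}
    (h : Z.IsPathFrom u w (a ++ b)) (ha : a ≠ []) (hb : b ≠ []) :
    ∃ v, Z.IsPathFrom u v a ∧ Z.IsPathFrom v w b := by
  obtain ⟨-, hm, hc, hh, hl⟩ := h
  unfold List.Chain' at hc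
  rw [List.isChain_append] at hc
  refine ⟨(a.getLast ha).dst, ⟨ha, fun e he => hm e (List.mem_append_left _ he), hc.1, ?_, ?_⟩,
    ⟨hb, fun e he => hm e (List.mem_append_right _ he), hc.2.1, ?_, ?_⟩⟩
  · rw [List.head?_append_of_ne_nil _ ha] at hh
    exact hh
  · rw [List.getLast?_eq_getLast ha]
    simp
  · -- head of b
    cases hbb : b.head? with
    | none => exact absurd (List.head?_eq_none_iff.mp hbb) hb
    | some y =>
      have := hc.2.2 (a.getLast ha) (by rw [List.getLast?_eq_getLast ha]; rfl) y hbb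
      simp [this]
  · rw [List.getLast?_append] at hl
    cases hgb : b.getLast? with
    | none => exact absurd (List.getLast?_eq_none_iff.mp hgb) hb
    | some y => rw [hgb] at hl; simpa using hl

lemma cntCuts_eq_zero {n : ℕ} {cs : List (Fin n)} {e : NBPEdge Var n}
    (h : ∀ c ∈ cs, e.src.val < c.val) : cntCuts cs e = 0 := by
  simp only [cntCuts, List.length_eq_zero_iff, List.filter_eq_nil_iff]
  intro c hc
  have := h c hc
  simp
  omega

lemma cntCuts_cons_of_le {n : ℕ} {cs : List (Fin n)} {v : Fin n} {e : NBPEdge Var n}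
    (h : v.val ≤ e.src.val) : cntCuts (v :: cs) e = cntCuts cs e + 1 := by
  have h' : v ≤ e.src := h
  simp [cntCuts, List.filter_cons, h']

lemma path_split {Z : NBP Var} {w v : Fin Z.n} :
    ∀ {p : List (NBPEdge Var Z.n)} {u : Fin Z.n}, Z.IsPathFrom u w p → v ∈ pathVertices p →
    v ≠ u → v ≠ w →
    ∃ a b, p = a ++ b ∧ Z.IsPathFrom u v a ∧ Z.IsPathFrom v w b := by
  intro p
  induction p with
  | nil => intro u hp hv _ _; simp [pathVertices] at hv
  | cons e t ih =>
    intro u hp hv hvu hvw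
    obtain ⟨-, hmem, hch, hhd, hlst⟩ := hp
    have hesrc : e.src = u := by simpa using hhd
    by_cases hvd : v = e.dst
    · -- split right after e
      cases t with
      | nil =>
        exfalso
        apply hvw
        rw [hvd]
        simpa using hlst
      | cons f t' =>
        refine ⟨[e], f :: t', rfl, ?_, ?_⟩
        · refine ⟨by simp, ?_, by simp [List.Chain'], by simp [hesrc], by simp [hvd]⟩
          intro g hg; rcases List.mem_singleton.mp hg with rfl
          exact hmem g (List.mem_cons_self)
        · have hef : e.dst = f.src := (List.isChain_cons_cons.mp hch).1
          refine ⟨by simp, ?_, (List.isChain_cons_cons.mp hch).2, by simp [← hef, hvd], ?_⟩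
          · intro g hg; exact hmem g (List.mem_cons_of_mem _ hg)
          · rw [List.getLast?_cons_cons] at hlst
            exact hlst
    · -- v in the tail
      have hvt : v ∈ pathVertices t := by
        obtain ⟨g, hg, hgs⟩ := mem_pathVertices.mp hv
        rcases List.mem_cons.mp hg with rfl | hgt
        · rcases hgs with h | h
          · exact absurd (h.symm ▸ hesrc) hvu
          · exact absurd h.symm hvd
        · exact mem_pathVertices.mpr ⟨g, hgt, hgs⟩
      have htne : t ≠ [] := by
        intro h; rw [h] at hvt; simp [pathVertices] at hvt
      obtain ⟨f, t', rfl⟩ := List.exists_cons_of_ne_nil htne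
      have hef : e.dst = f.src := (List.isChain_cons_cons.mp hch).1
      have hpt : Z.IsPathFrom e.dst w (f :: t') := by
        refine ⟨by simp, fun g hg => hmem g (List.mem_cons_of_mem _ hg),
          (List.isChain_cons_cons.mp hch).2, by simp [hef], ?_⟩
        rw [List.getLast?_cons_cons] at hlst
        exact hlst
      obtain ⟨a, b, heq, hpa, hpb⟩ := ih hpt hvt (fun h => hvd h) hvw
      have hane : a ≠ [] := hpa.1
      obtain ⟨a0, a', rfl⟩ := List.exists_cons_of_ne_nil hane
      have ha0 : a0.src = e.dst := by
        have := hpa.2.2.2.1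
        simpa using this
      refine ⟨e :: a0 :: a', b, by rw [heq]; rfl, ?_, hpb⟩
      refine ⟨by simp, ?_, ?_, by simp [hesrc], ?_⟩
      · intro g hg
        rcases List.mem_cons.mp hg with rfl | hg'
        · exact hmem g (List.mem_cons_self)
        · apply hmem
          have : g ∈ (a0 :: a') ++ b := List.mem_append_left _ hg'
          rw [← heq] at this
          exact List.mem_cons_of_mem _ this
      · unfold List.Chain'
        rw [List.isChain_cons_cons]
        exact ⟨by rw [ha0], hpa.2.2.1⟩
      · rw [List.getLast?_cons_cons]
        exact hpa.2.2.2.2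

lemma comb_ex {Z : NBP Var} :
    ∀ (cs : List (Fin Z.n)) (u : Fin Z.n) (p q : List (NBPEdge Var Z.n)),
    Z.IsPathFrom u Z.sink p → Z.IsPathFrom u Z.sink q →
    cs.Pairwise (fun a b => a.val < b.val) →
    (∀ c ∈ cs, u.val < c.val ∧ c ≠ Z.sink ∧ c ∈ pathVertices p ∧ c ∈ pathVertices q) →
    ∃ r, Z.IsPathFrom u Z.sink r ∧ (∀ c ∈ cs, c ∈ pathVertices r) ∧
      ∀ e ∈ r, (e ∈ p ∧ cntCuts cs e % 2 = 0) ∨ (e ∈ q ∧ cntCuts cs e % 2 = 1) := by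
  intro cs
  induction cs with
  | nil =>
    intro u p q hp hq _ _
    exact ⟨p, hp, by simp, fun e he => Or.inl ⟨he, by simp [cntCuts]⟩⟩
  | cons v cs ih =>
    intro u p q hp hq hsort hcs
    obtain ⟨huv, hvs, hvp, hvq⟩ := hcs v (List.mem_cons_self)
    have hvu : v ≠ u := by intro h; rw [h] at huv; omega
    obtain ⟨a, b, hpe, hpa, hpb⟩ := path_split hp hvp hvu hvs
    obtain ⟨a₂, b₂, hqe, hqa, hqb⟩ := path_split hq hvq hvu hvs
    have hsort' := (List.pairwise_cons.mp hsort).2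
    have hvlt := (List.pairwise_cons.mp hsort).1
    have hcs' : ∀ c ∈ cs, v.val < c.val ∧ c ≠ Z.sink ∧ c ∈ pathVertices b₂ ∧
        c ∈ pathVertices b := by
      intro c hc
      have hvc := hvlt c hc
      obtain ⟨-, hcs2, hcp, hcq⟩ := hcs c (List.mem_cons_of_mem _ hc)
      refine ⟨hvc, hcs2, ?_, ?_⟩
      · rw [hqe, pathVertices_append] at hcq
        rcases Finset.mem_union.mp hcq with h | h
        · have := (vert_bounds hqa h).2; omega
        · exact h
      · rw [hpe, pathVertices_append] at hcp
        rcases Finset.mem_union.mp hcp with h | h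
        · have := (vert_bounds hpa h).2; omega
        · exact h
    obtain ⟨r', hr', hcr', hre'⟩ := ih v b₂ b hqb hpb hsort' hcs'
    refine ⟨a ++ r', path_glue hpa hr', ?_, ?_⟩
    · intro c hc
      rw [pathVertices_append]
      rcases List.mem_cons.mp hc with rfl | hc'
      · apply Finset.mem_union_left
        have hane : a ≠ [] := hpa.1
        have hld : (a.getLast hane).dst = c := by
          have := hpa.2.2.2.2
          rw [List.getLast?_eq_getLast hane] at this
          simpa using this
        exact mem_pathVertices.mpr ⟨a.getLast hane, List.getLast_mem hane, Or.inr hld⟩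
      · exact Finset.mem_union_right _ (hcr' c hc')
    · intro e he
      rcases List.mem_append.mp he with hea | her
      · refine Or.inl ⟨by rw [hpe]; exact List.mem_append_left _ hea, ?_⟩
        have h0 : cntCuts (v :: cs) e = 0 := by
          apply cntCuts_eq_zero
          intro c hc
          have hb := edge_bounds hpa e hea
          rcases List.mem_cons.mp hc with rfl | hc'
          · omega
          · have := hvlt c hc'; omega
        simp [h0]
      · have hsrc : v.val ≤ e.src.val := by
          rcases hre' e her with ⟨h1, -⟩ | ⟨h1, -⟩
          · exact (edge_bounds hqb e h1).1
          · exact (edge_bounds hpb e h1).1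
        rcases hre' e her with ⟨h1, h2⟩ | ⟨h1, h2⟩
        · refine Or.inr ⟨by rw [hqe]; exact List.mem_append_right _ h1, ?_⟩
          rw [cntCuts_cons_of_le hsrc]; omega
        · refine Or.inl ⟨by rw [hpe]; exact List.mem_append_right _ h1, ?_⟩
          rw [cntCuts_cons_of_le hsrc]; omega

lemma trans_parity {Z : NBP Var} (x : Var) :
    ∀ (cs : List (Fin Z.n)) (u : Fin Z.n) (p P : List (NBPEdge Var Z.n)) (ε : ℕ), ε < 2 →
    Z.IsPathFrom u Z.sink p → Z.IsPathFrom u Z.sink P →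
    cs.Pairwise (fun a b => a.val < b.val) →
    (∀ c ∈ cs, u.val < c.val ∧ c ≠ Z.sink ∧ c ∈ pathVertices p ∧ c ∈ pathVertices P) →
    (∀ r r', Z.IsPathFrom u Z.sink r → Z.IsPathFrom u Z.sink r' →
      r.countP (labX x) = r'.countP (labX x)) →
    (∀ e ∈ P, labX x e → cntCuts cs e % 2 = ε) →
    ∀ e ∈ p, labX x e → cntCuts cs e % 2 = ε := by
  intro cs
  induction cs with
  | nil =>
    intro u p P ε hε hp hP _ _ heq hPe e he hl
    have h0 : cntCuts ([] : List (Fin Z.n)) e = 0 := by simp [cntCuts]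
    rcases (by omega : ε = 0 ∨ ε = 1) with rfl | rfl
    · simp [h0]
    · exfalso
      have hP0 : P.countP (labX x) = 0 := by
        rw [List.countP_eq_zero]
        intro f hf hfl
        have h1 := hPe f hf hfl
        simp [cntCuts] at h1
      have h2 := heq p P hp hP
      have h3 : 0 < p.countP (labX x) := List.countP_pos_iff.mpr ⟨e, he, hl⟩
      omega
  | cons v cs ih =>
    intro u p P ε hε hp hP hsort hcs heq hPe
    obtain ⟨huv, hvs, hvp, hvP⟩ := hcs v (List.mem_cons_self)
    have hvu : v ≠ u := by intro h; rw [h] at huv; omega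
    obtain ⟨a, b, hpe, hpa, hpb⟩ := path_split hp hvp hvu hvs
    obtain ⟨A, B, hPE, hPA, hPB⟩ := path_split hP hvP hvu hvs
    have hsort' := (List.pairwise_cons.mp hsort).2
    have hvlt := (List.pairwise_cons.mp hsort).1
    have hocc : a.countP (labX x) = A.countP (labX x) := by
      have h1 := heq (a ++ B) (A ++ B) (path_glue hpa hPB) (path_glue hPA hPB)
      simp only [List.countP_append] at h1
      omega
    have heq' : ∀ r r', Z.IsPathFrom v Z.sink r → Z.IsPathFrom v Z.sink r' →
        r.countP (labX x) = r'.countP (labX x) := by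
      intro r r' hr hr'
      have h1 := heq (a ++ r) (a ++ r') (path_glue hpa hr) (path_glue hpa hr')
      simp only [List.countP_append] at h1
      omega
    have hcs' : ∀ c ∈ cs, v.val < c.val ∧ c ≠ Z.sink ∧ c ∈ pathVertices b ∧
        c ∈ pathVertices B := by
      intro c hc
      have hvc := hvlt c hc
      obtain ⟨-, hcs2, hcp, hcq⟩ := hcs c (List.mem_cons_of_mem _ hc)
      refine ⟨hvc, hcs2, ?_, ?_⟩
      · rw [hpe, pathVertices_append] at hcp
        rcases Finset.mem_union.mp hcp with h | h
        · have := (vert_bounds hpa h).2; omega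
        · exact h
      · rw [hPE, pathVertices_append] at hcq
        rcases Finset.mem_union.mp hcq with h | h
        · have := (vert_bounds hPA h).2; omega
        · exact h
    have hB : ∀ f ∈ B, labX x f → cntCuts cs f % 2 = 1 - ε := by
      intro f hf hfl
      have h1 := hPe f (by rw [hPE]; exact List.mem_append_right _ hf) hfl
      rw [cntCuts_cons_of_le (edge_bounds hPB f hf).1] at h1
      omega
    have IH := ih v b B (1 - ε) (by omega) hpb hPB hsort' hcs' heq' hB
    intro e he hl
    rcases List.mem_append.mp (by rw [← hpe]; exact he : e ∈ a ++ b) with hea | heb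
    · have hcnt0 : cntCuts (v :: cs) e = 0 := by
        apply cntCuts_eq_zero
        intro c hc
        have hbnd := edge_bounds hpa e hea
        rcases List.mem_cons.mp hc with rfl | hc'
        · omega
        · have := hvlt c hc'; omega
      rcases (by omega : ε = 0 ∨ ε = 1) with rfl | rfl
      · simp [hcnt0]
      · exfalso
        have hA0 : A.countP (labX x) = 0 := by
          rw [List.countP_eq_zero]
          intro f hf hfl
          have h1 := hPe f (by rw [hPE]; exact List.mem_append_left _ hf) hfl
          have h2 : cntCuts (v :: cs) f = 0 := by
            apply cntCuts_eq_zero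
            intro c hc
            have hbnd := edge_bounds hPA f hf
            rcases List.mem_cons.mp hc with rfl | hc'
            · omega
            · have := hvlt c hc'; omega
          rw [h2] at h1
          simp at h1
        have h3 : 0 < a.countP (labX x) := List.countP_pos_iff.mpr ⟨e, hea, hl⟩
        omega
    · have h1 := IH e heb hl
      rw [cntCuts_cons_of_le (edge_bounds hpb e heb).1]
      omega

def cutsOf {n : ℕ} (parts : List (List (NBPEdge Var n))) : List (Fin n) :=
  parts.dropLast.filterMap (fun q => q.getLast?.map NBPEdge.dst)

lemma cutsOf_mem {n : ℕ} {parts : List (List (NBPEdge Var n))} {c : Fin n}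
    (hc : c ∈ cutsOf parts) : ∃ f ∈ parts.flatten, f.dst = c := by
  simp only [cutsOf, List.mem_filterMap] at hc
  obtain ⟨q, hq, hqc⟩ := hc
  obtain ⟨g, hg1, hg2⟩ := Option.map_eq_some_iff.mp hqc
  have hgq : g ∈ q := List.mem_of_mem_getLast? hg1
  have hqp : q ∈ parts := (List.dropLast_sublist parts).mem hq
  exact ⟨g, List.mem_flatten.mpr ⟨q, hqp, hgq⟩, hg2⟩

lemma part_parity {Z : NBP Var} (x : Var) :
    ∀ (parts : List (List (NBPEdge Var Z.n))), ∀ (u : Fin Z.n) (ε : ℕ), ε < 2 →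
    (∀ q ∈ parts, q ≠ []) → Z.IsPathFrom u Z.sink parts.flatten →
    (∀ k, x ∈ pathVars (parts.getD k []) → k % 2 = ε) →
    ∀ e ∈ parts.flatten, labX x e → cntCuts (cutsOf parts) e % 2 = ε := by
  intro parts
  induction parts with
  | nil =>
    intro u ε _ _ hp _
    exact absurd rfl hp.1
  | cons s rest ih =>
    intro u ε hε hne hp hsplit e he hl
    have hs : s ≠ [] := hne s (List.mem_cons_self)
    have hflat : (s :: rest).flatten = s ++ rest.flatten := rfl
    have hxs : e ∈ s → ε = 0 := by
      intro hes
      have hx : x ∈ pathVars s := mem_pathVars.mpr ⟨e, hes, labX_iff.mp hl⟩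
      have := hsplit 0 (by simpa using hx)
      omega
    by_cases hrne : rest = []
    · subst hrne
      have hcuts : cutsOf [s] = ([] : List (Fin Z.n)) := rfl
      have he' : e ∈ s := by simpa using he
      have := hxs he'
      simp [hcuts, cntCuts, this]
    · have hrfne : rest.flatten ≠ [] := by
        obtain ⟨t, rest', rfl⟩ := List.exists_cons_of_ne_nil hrne
        have := hne t (List.mem_cons_of_mem _ (List.mem_cons_self))
        simp [this]
      obtain ⟨v, hsv, hrv⟩ := path_unglue (by rw [← hflat]; exact hp) hs hrfne
      have hsvl : s.getLast?.map NBPEdge.dst = some v := hsv.2.2.2.2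
      have hcuts : cutsOf (s :: rest) = v :: cutsOf rest := by
        simp only [cutsOf, List.dropLast_cons_of_ne_nil hrne, List.filterMap_cons, hsvl]
      rw [hcuts]
      have hsplit' : ∀ k, x ∈ pathVars (rest.getD k []) → k % 2 = 1 - ε := by
        intro k hk
        have := hsplit (k + 1) (by simpa [List.getD_cons_succ] using hk)
        omega
      rcases List.mem_append.mp (by rw [← hflat]; exact he : e ∈ s ++ rest.flatten)
        with hes | her
      · have hε0 := hxs hes
        have h0 : cntCuts (v :: cutsOf rest) e = 0 := by
          apply cntCuts_eq_zero
          intro c hc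
          have hbe := edge_bounds hsv e hes
          rcases List.mem_cons.mp hc with rfl | hc'
          · omega
          · obtain ⟨f, hf, rfl⟩ := cutsOf_mem hc'
            have hbf := edge_bounds hrv f hf
            omega
        simp [h0, hε0]
      · have hIH := ih v (1 - ε) (by omega)
          (fun q hq => hne q (List.mem_cons_of_mem _ hq)) hrv hsplit' e her hl
        rw [cntCuts_cons_of_le (edge_bounds hrv e her).1]
        omega

lemma cuts_sorted {Z : NBP Var} :
    ∀ (parts : List (List (NBPEdge Var Z.n))), ∀ (u : Fin Z.n),
    (∀ q ∈ parts, q ≠ []) → Z.IsPathFrom u Z.sink parts.flatten →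
    (cutsOf parts).Pairwise (fun a b => a.val < b.val) := by
  intro parts
  induction parts with
  | nil => intro u _ _; simp [cutsOf]
  | cons s rest ih =>
    intro u hne hp
    have hs : s ≠ [] := hne s (List.mem_cons_self)
    have hflat : (s :: rest).flatten = s ++ rest.flatten := rfl
    by_cases hrne : rest = []
    · subst hrne; simp [cutsOf]
    · have hrfne : rest.flatten ≠ [] := by
        obtain ⟨t, rest', rfl⟩ := List.exists_cons_of_ne_nil hrne
        have := hne t (List.mem_cons_of_mem _ (List.mem_cons_self))
        simp [this]
      obtain ⟨v, hsv, hrv⟩ := path_unglue (by rw [← hflat]; exact hp) hs hrfne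
      have hsvl : s.getLast?.map NBPEdge.dst = some v := hsv.2.2.2.2
      have hcuts : cutsOf (s :: rest) = v :: cutsOf rest := by
        simp only [cutsOf, List.dropLast_cons_of_ne_nil hrne, List.filterMap_cons, hsvl]
      rw [hcuts, List.pairwise_cons]
      refine ⟨?_, ih v (fun q hq => hne q (List.mem_cons_of_mem _ hq)) hrv⟩
      intro c hc
      obtain ⟨f, hf, rfl⟩ := cutsOf_mem hc
      have hbf := edge_bounds hrv f hf
      omega

lemma exists_path_from_source (Z : NBP Var) :
    ∀ (m : ℕ) (v : Fin Z.n), v.val ≤ m → v ≠ Z.source → ∃ p, Z.IsPathFrom Z.source v p := by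
  intro m
  induction m with
  | zero =>
    intro v hv hvs
    obtain ⟨e, hee, hed⟩ := Z.only_source v hvs
    have := Fin.lt_def.mp (Z.acyc e hee)
    rw [hed] at this
    omega
  | succ m ih =>
    intro v hv hvs
    obtain ⟨e, hee, hed⟩ := Z.only_source v hvs
    have hlt := Fin.lt_def.mp (Z.acyc e hee)
    by_cases h : e.src = Z.source
    · exact ⟨[e], by rw [← h, ← hed]; exact single_path hee⟩
    · obtain ⟨p, hp⟩ := ih e.src (by rw [hed] at hlt; omega) h
      exact ⟨p ++ [e], path_glue hp (by rw [← hed]; exact single_path hee)⟩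

lemma exists_path_to_sink (Z : NBP Var) :
    ∀ (m : ℕ) (v : Fin Z.n), Z.n - v.val ≤ m → v ≠ Z.sink → ∃ p, Z.IsPathFrom v Z.sink p := by
  intro m
  induction m with
  | zero =>
    intro v hv _
    have := v.isLt
    omega
  | succ m ih =>
    intro v hv hvs
    obtain ⟨e, hee, hes⟩ := Z.only_sink v hvs
    have hlt := Fin.lt_def.mp (Z.acyc e hee)
    by_cases h : e.dst = Z.sink
    · exact ⟨[e], by rw [← h, ← hes]; exact single_path hee⟩
    · obtain ⟨p, hp⟩ := ih e.dst (by rw [hes] at hlt; omega) h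
      exact ⟨[e] ++ p, path_glue (by rw [← hes]; exact single_path hee) hp⟩

lemma occ_pos {Z : NBP Var} {d : ℕ} (hZ : Z.UniformReadTimes d) {x : Var} (hx : x ∈ Z.vars)
    {r : List (NBPEdge Var Z.n)} (hr : Z.IsPathFrom Z.source Z.sink r) :
    0 < r.countP (labX x) := by
  obtain ⟨e, hee, hel⟩ : ∃ e ∈ Z.edges, labX x e := by
    simp only [NBP.vars, Finset.mem_biUnion] at hx
    obtain ⟨e, hee, hxe⟩ := hx
    refine ⟨e, hee, ?_⟩
    cases h : e.lab with
    | none => rw [h] at hxe; simp at hxe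
    | some l =>
      obtain ⟨y, b⟩ := l
      rw [h] at hxe
      simp at hxe
      rw [labX_iff]
      exact ⟨b, by rw [h, hxe]⟩
  obtain ⟨p, hp, hep⟩ : ∃ p, Z.IsPathFrom Z.source Z.sink p ∧ e ∈ p := by
    by_cases h1 : e.src = Z.source <;> by_cases h2 : e.dst = Z.sink
    · exact ⟨[e], by rw [← h1, ← h2]; exact single_path hee, List.mem_cons_self⟩
    · obtain ⟨p, hp⟩ := exists_path_to_sink Z Z.n e.dst (by omega) h2
      exact ⟨[e] ++ p, path_glue (by rw [← h1]; exact single_path hee) hp,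
        List.mem_append_left _ (List.mem_cons_self)⟩
    · obtain ⟨p, hp⟩ := exists_path_from_source Z Z.n e.src (by omega) h1
      exact ⟨p ++ [e], path_glue hp (by rw [← h2]; exact single_path hee),
        List.mem_append_right _ (List.mem_cons_self)⟩
    · obtain ⟨p, hp⟩ := exists_path_from_source Z Z.n e.src (by omega) h1
      obtain ⟨q, hq⟩ := exists_path_to_sink Z Z.n e.dst (by omega) h2
      exact ⟨p ++ ([e] ++ q), path_glue hp (path_glue (single_path hee) hq),
        List.mem_append_right _ (List.mem_append_left _ (List.mem_cons_self))⟩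
  have h1 := hZ.2 p hp x hx
  have h2 := hZ.2 r hr x hx
  rw [occCount_eq_countP] at h1 h2
  have h3 : 0 < p.countP (labX x) := List.countP_pos_iff.mpr ⟨e, hep, hel⟩
  omega

lemma consistent_eq {S : Finset (Var × Bool)} (hc : Consistent S) {x : Var} {b1 b2 : Bool}
    (h1 : (x, b1) ∈ S) (h2 : (x, b2) ∈ S) : b1 = b2 := by
  cases b1 <;> cases b2
  · rfl
  · exact absurd ⟨h2, h1⟩ (hc x)
  · exact absurd ⟨h1, h2⟩ (hc x)
  · rfl

lemma aux_main (Z : NBP Var) (d : ℕ) (hZ : Z.UniformReadTimes d)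
    (X : Finset (Fin Z.n)) (Y₁ Y₂ : Finset Var)
    (hY₁v : Y₁ ⊆ Z.vars) (hY₂v : Y₂ ⊆ Z.vars) (hsrc : Z.source ∉ X) (hsink : Z.sink ∉ X)
    (P : List (NBPEdge Var Z.n)) (parts : List (List (NBPEdge Var Z.n)))
    (hPss : Z.IsSourceSink P) (hGen : GeneratesPartition X P parts)
    (hsplit : OddEvenSplit parts Y₁ Y₂)
    (Y₁' Y₂' : Finset Var) (h₁ : Y₁' ⊆ Y₁) (h₂ : Y₂' ⊆ Y₂)
    (S : Finset (Var × Bool)) (hS : AssignsExactly (Z.vars \ (Y₁ ∪ Y₂)) S)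
    (Q' Q'' : List (NBPEdge Var Z.n))
    (hQ' : Z.IsCompPath Q') (hQ'' : Z.IsCompPath Q'')
    (hX' : X ⊆ pathVertices Q') (hX'' : X ⊆ pathVertices Q'')
    (hS' : S ⊆ pathLits Q') (hS'' : S ⊆ pathLits Q'')
    (hneg' : ∀ x ∈ Y₁', (x, false) ∈ pathLits Q')
    (hneg'' : ∀ x ∈ Y₂', (x, false) ∈ pathLits Q'') :
    ∃ Q, Z.IsCompPath Q ∧ X ⊆ pathVertices Q ∧ S ⊆ pathLits Q ∧
      ∀ x ∈ Y₁' ∪ Y₂', (x, false) ∈ pathLits Q := by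
  obtain ⟨hPeq, hlen, hne, hXeq⟩ := hGen
  have hXeq' : (cutsOf parts).toFinset = X := hXeq
  set cs := cutsOf parts with hcsdef
  have hPflat : Z.IsPathFrom Z.source Z.sink parts.flatten := by rw [← hPeq]; exact hPss
  have hmemX : ∀ c ∈ cs, c ∈ X := fun c hc => hXeq' ▸ List.mem_toFinset.mpr hc
  have hXmem : ∀ c ∈ X, c ∈ cs := by
    intro c hc
    rw [← hXeq'] at hc
    exact List.mem_toFinset.mp hc
  have hPv : ∀ c ∈ cs, c ∈ pathVertices P := by
    intro c hc
    obtain ⟨f, hf, rfl⟩ := cutsOf_mem hc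
    refine mem_pathVertices.mpr ⟨f, ?_, Or.inr rfl⟩
    rw [hPeq]; exact hf
  have hsort := cuts_sorted parts Z.source hne hPflat
  have hprops : ∀ c ∈ cs, Z.source.val < c.val ∧ c ≠ Z.sink := by
    intro c hc
    have hcX := hmemX c hc
    have h1 : c ≠ Z.source := fun h => hsrc (h ▸ hcX)
    have h2 := (vert_bounds hQ'.1 (hX' hcX)).1
    have h3 : c.val ≠ Z.source.val := fun h => h1 (Fin.val_injective h)
    exact ⟨by omega, fun h => hsink (h ▸ hcX)⟩
  obtain ⟨R, hR, hRv, hRe⟩ := comb_ex cs Z.source Q' Q'' hQ'.1 hQ''.1 hsort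
    (fun c hc => ⟨(hprops c hc).1, (hprops c hc).2, hX' (hmemX c hc), hX'' (hmemX c hc)⟩)
  have heqocc : ∀ x ∈ Z.vars, ∀ r r', Z.IsPathFrom Z.source Z.sink r →
      Z.IsPathFrom Z.source Z.sink r' → r.countP (labX x) = r'.countP (labX x) := by
    intro x hx r r' hr hr'
    have h1 := hZ.2 r hr x hx
    have h2 := hZ.2 r' hr' x hx
    rw [occCount_eq_countP] at h1 h2
    omega
  have hparP₁ : ∀ x ∈ Y₁, ∀ e ∈ P, labX x e → cntCuts cs e % 2 = 0 := by
    intro x hx e he hl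
    exact part_parity x parts Z.source 0 (by omega) hne hPflat
      (fun k hk => (hsplit k x hk).1 hx) e (by rw [← hPeq]; exact he) hl
  have hparP₂ : ∀ x ∈ Y₂, ∀ e ∈ P, labX x e → cntCuts cs e % 2 = 1 := by
    intro x hx e he hl
    exact part_parity x parts Z.source 1 (by omega) hne hPflat
      (fun k hk => (hsplit k x hk).2 hx) e (by rw [← hPeq]; exact he) hl
  have hpar₁ : ∀ x ∈ Y₁, ∀ e ∈ Q'', labX x e → cntCuts cs e % 2 = 0 := by
    intro x hx
    exact trans_parity x cs Z.source Q'' P 0 (by omega) hQ''.1 hPss hsort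
      (fun c hc => ⟨(hprops c hc).1, (hprops c hc).2, hX'' (hmemX c hc), hPv c hc⟩)
      (heqocc x (hY₁v hx)) (hparP₁ x hx)
  have hpar₂ : ∀ x ∈ Y₂, ∀ e ∈ Q', labX x e → cntCuts cs e % 2 = 1 := by
    intro x hx
    exact trans_parity x cs Z.source Q' P 1 (by omega) hQ'.1 hPss hsort
      (fun c hc => ⟨(hprops c hc).1, (hprops c hc).2, hX' (hmemX c hc), hPv c hc⟩)
      (heqocc x (hY₂v hx)) (hparP₂ x hx)
  have key₁ : ∀ x ∈ Y₁, ∀ e ∈ R, (∃ b, e.lab = some (x, b)) → e ∈ Q' := by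
    intro x hx e he hl
    have hlx : labX x e := labX_iff.mpr hl
    rcases hRe e he with ⟨h1, -⟩ | ⟨h2, hodd⟩
    · exact h1
    · have := hpar₁ x hx e h2 hlx
      omega
  have key₂ : ∀ x ∈ Y₂, ∀ e ∈ R, (∃ b, e.lab = some (x, b)) → e ∈ Q'' := by
    intro x hx e he hl
    have hlx : labX x e := labX_iff.mpr hl
    rcases hRe e he with ⟨h1, heven⟩ | ⟨h2, -⟩
    · have := hpar₂ x hx e h1 hlx
      omega
    · exact h2
  have hvarsof : ∀ (e : NBPEdge Var Z.n), e ∈ Z.edges → ∀ {x : Var} {b : Bool},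
      e.lab = some (x, b) → x ∈ Z.vars := by
    intro e he x b hl
    simp only [NBP.vars, Finset.mem_biUnion]
    exact ⟨e, he, by simp [hl]⟩
  have hcons : Consistent (pathLits R) := by
    intro x hx
    obtain ⟨hT, hF⟩ := hx
    obtain ⟨e, heR, hel⟩ := mem_pathLits.mp hT
    obtain ⟨f, hfR, hfl⟩ := mem_pathLits.mp hF
    have hxv : x ∈ Z.vars := hvarsof e (hR.2.1 e heR) hel
    by_cases hx1 : x ∈ Y₁
    · have he' := key₁ x hx1 e heR ⟨_, hel⟩
      have hf' := key₁ x hx1 f hfR ⟨_, hfl⟩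
      exact hQ'.2 x ⟨mem_pathLits.mpr ⟨e, he', hel⟩, mem_pathLits.mpr ⟨f, hf', hfl⟩⟩
    by_cases hx2 : x ∈ Y₂
    · have he' := key₂ x hx2 e heR ⟨_, hel⟩
      have hf' := key₂ x hx2 f hfR ⟨_, hfl⟩
      exact hQ''.2 x ⟨mem_pathLits.mpr ⟨e, he', hel⟩, mem_pathLits.mpr ⟨f, hf', hfl⟩⟩
    · obtain ⟨b, hbS, -⟩ := hS.2 x (Finset.mem_sdiff.mpr ⟨hxv, by simp [hx1, hx2]⟩)
      have hbe : ∀ (g : NBPEdge Var Z.n), g ∈ R → ∀ (c : Bool), g.lab = some (x, c) →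
          c = b := by
        intro g hg c hgl
        rcases hRe g hg with ⟨h1, -⟩ | ⟨h1, -⟩
        · exact consistent_eq hQ'.2 (mem_pathLits.mpr ⟨g, h1, hgl⟩) (hS' hbS)
        · exact consistent_eq hQ''.2 (mem_pathLits.mpr ⟨g, h1, hgl⟩) (hS'' hbS)
      have hc1 := hbe e heR true hel
      have hc2 := hbe f hfR false hfl
      rw [← hc1] at hc2
      exact Bool.false_ne_true hc2
  have hSR : S ⊆ pathLits R := by
    intro l hl
    obtain ⟨x, b⟩ := l
    have hxv : x ∈ Z.vars := (Finset.mem_sdiff.mp (hS.1 _ hl)).1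
    obtain ⟨e, heR, hel⟩ := List.countP_pos_iff.mp (occ_pos hZ hxv hR)
    obtain ⟨c, helc⟩ := labX_iff.mp hel
    have hc : c = b := by
      rcases hRe e heR with ⟨h1, -⟩ | ⟨h1, -⟩
      · exact consistent_eq hQ'.2 (mem_pathLits.mpr ⟨e, h1, helc⟩) (hS' hl)
      · exact consistent_eq hQ''.2 (mem_pathLits.mpr ⟨e, h1, helc⟩) (hS'' hl)
    exact mem_pathLits.mpr ⟨e, heR, hc ▸ helc⟩
  have hnegR : ∀ x ∈ Y₁' ∪ Y₂', (x, false) ∈ pathLits R := by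
    intro x hx
    rcases Finset.mem_union.mp hx with hx1 | hx2
    · have hxv := hY₁v (h₁ hx1)
      obtain ⟨e, heR, hel⟩ := List.countP_pos_iff.mp (occ_pos hZ hxv hR)
      obtain ⟨c, helc⟩ := labX_iff.mp hel
      have heQ' := key₁ x (h₁ hx1) e heR ⟨c, helc⟩
      have hcf : c = false :=
        consistent_eq hQ'.2 (mem_pathLits.mpr ⟨e, heQ', helc⟩) (hneg' x hx1)
      exact mem_pathLits.mpr ⟨e, heR, hcf ▸ helc⟩
    · have hxv := hY₂v (h₂ hx2)
      obtain ⟨e, heR, hel⟩ := List.countP_pos_iff.mp (occ_pos hZ hxv hR)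
      obtain ⟨c, helc⟩ := labX_iff.mp hel
      have heQ'' := key₂ x (h₂ hx2) e heR ⟨c, helc⟩
      have hcf : c = false :=
        consistent_eq hQ''.2 (mem_pathLits.mpr ⟨e, heQ'', helc⟩) (hneg'' x hx2)
      exact mem_pathLits.mpr ⟨e, heR, hcf ▸ helc⟩
  exact ⟨R, ⟨hR, hcons⟩, fun c hc => hRv c (hXmem c hc), hSR, hnegR⟩

end Aux

/-- combining two computational paths through a separating set `X` into
a single computational path assigning `Y₁' ∪ Y₂'` negatively. -/
theorem statement_15 (Var : Type) [DecidableEq Var] (Z : NBP Var) (d : ℕ)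
    (hZ : Z.UniformReadTimes d) (X : Finset (Fin Z.n)) (Y₁ Y₂ : Finset Var)
    (hsep : Z.Separates X Y₁ Y₂)
    (Y₁' Y₂' : Finset Var) (h₁ : Y₁' ⊆ Y₁) (h₂ : Y₂' ⊆ Y₂)
    (S : Finset (Var × Bool)) (hS : AssignsExactly (Z.vars \ (Y₁ ∪ Y₂)) S)
    (Q' Q'' : List (NBPEdge Var Z.n))
    (hQ' : Z.IsCompPath Q') (hQ'' : Z.IsCompPath Q'')
    (hX' : X ⊆ pathVertices Q') (hX'' : X ⊆ pathVertices Q'')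
    (hS' : S ⊆ pathLits Q') (hS'' : S ⊆ pathLits Q'')
    (hneg' : ∀ x ∈ Y₁', (x, false) ∈ pathLits Q')
    (hneg'' : ∀ x ∈ Y₂', (x, false) ∈ pathLits Q'') :
    ∃ Q, Z.IsCompPath Q ∧ X ⊆ pathVertices Q ∧ S ⊆ pathLits Q ∧
      ∀ x ∈ Y₁' ∪ Y₂', (x, false) ∈ pathLits Q := by
  obtain ⟨hdisj, hY₁v, hY₂v, hsrc, hsink, P, parts, hP, hGen, hsplit | hsplit⟩ := hsep
  · exact aux_main Z d hZ X Y₁ Y₂ hY₁v hY₂v hsrc hsink P parts hP.1 hGen hsplit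
      Y₁' Y₂' h₁ h₂ S hS Q' Q'' hQ' hQ'' hX' hX'' hS' hS'' hneg' hneg''
  · have hS2 : AssignsExactly (Z.vars \ (Y₂ ∪ Y₁)) S := by rwa [Finset.union_comm]
    obtain ⟨Q, hQ, hXQ, hSQ, hneg⟩ := aux_main Z d hZ X Y₂ Y₁ hY₂v hY₁v hsrc hsink P parts
      hP.1 hGen hsplit Y₂' Y₁' h₂ h₁ S hS2 Q'' Q' hQ'' hQ' hX'' hX' hS'' hS' hneg'' hneg'
    exact ⟨Q, hQ, hXQ, hSQ, fun x hx => hneg x (by rwa [Finset.union_comm])⟩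

end NBPPaper
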